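/- Let β > 0 and s₁, s₂ ≥ 1. Then ∑ τ(xz − yw) ≪ s₁²s₂²(log(s₁s₂ + 2))⁴, where the sum is over integers x, y with 1 ≤ |x|, |y| ≤ βs₁ and z, w with 1 ≤ |z|, |w| ≤ βs₂ satisfying xz − yw ≠ 0, and τ is the divisor function. The implied constant depends only on β. -/

import Mathlib

open Finset



private lemma divisors_eq_filter {N n : ℕ} (hn : n ∈ Finset.Ioc 0 N) :
    n.divisors = (Finset.Ioc 0 N).filter (· ∣ n) := by
  simp only [Finset.mem_Ioc] at hn
  ext d
  simp only [Nat.mem_divisors, Finset.mem_filter, Finset.mem_Ioc]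
  constructor
  · rintro ⟨hd, hn0⟩
    exact ⟨⟨Nat.pos_of_dvd_of_pos hd hn.1, le_trans (Nat.le_of_dvd hn.1 hd) hn.2⟩, hd⟩
  · rintro ⟨_, hd⟩
    exact ⟨hd, by omega⟩

private lemma sum_inv_le (N : ℕ) : ∑ d ∈ Finset.Ioc 0 N, (d : ℝ)⁻¹ ≤ 1 + Real.log N := by
  have h := harmonic_le_one_add_log N
  rw [harmonic_eq_sum_Icc] at h
  have he : Finset.Ioc 0 N = Finset.Icc 1 N := by rw [← Finset.Icc_add_one_left_eq_Ioc]; rfl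
  rw [he]
  calc ∑ d ∈ Finset.Icc 1 N, (d : ℝ)⁻¹
      = ((∑ i ∈ Finset.Icc 1 N, (i : ℚ)⁻¹ : ℚ) : ℝ) := by push_cast; rfl
    _ ≤ 1 + Real.log N := h

private lemma sum_tau_le (N : ℕ) :
    ∑ n ∈ Finset.Ioc 0 N, (n.divisors.card : ℝ) ≤ N * (1 + Real.log N) := by
  have h1 : ∑ n ∈ Finset.Ioc 0 N, (n.divisors.card : ℝ)
      = ∑ d ∈ Finset.Ioc 0 N, ((N / d : ℕ) : ℝ) := by
    rw [← Nat.cast_sum, ← Nat.cast_sum]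
    congr 1
    calc ∑ n ∈ Ioc 0 N, n.divisors.card
        = ∑ n ∈ Ioc 0 N, ((Ioc 0 N).filter (· ∣ n)).card :=
          sum_congr rfl fun n hn => by rw [divisors_eq_filter hn]
      _ = ∑ n ∈ Ioc 0 N, ∑ d ∈ Ioc 0 N, if d ∣ n then 1 else 0 :=
          sum_congr rfl fun n _ => Finset.card_filter _ _
      _ = ∑ d ∈ Ioc 0 N, ∑ n ∈ Ioc 0 N, if d ∣ n then 1 else 0 := Finset.sum_comm
      _ = ∑ d ∈ Ioc 0 N, ((Ioc 0 N).filter (d ∣ ·)).card :=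
          sum_congr rfl fun d _ => (Finset.card_filter _ _).symm
      _ = ∑ d ∈ Ioc 0 N, N / d :=
          sum_congr rfl fun d _ => Nat.Ioc_filter_dvd_card_eq_div N d
  rw [h1]
  calc ∑ d ∈ Ioc 0 N, ((N / d : ℕ) : ℝ)
      ≤ ∑ d ∈ Ioc 0 N, (N : ℝ) * (d : ℝ)⁻¹ := by
        refine sum_le_sum fun d _ => ?_
        rw [← div_eq_mul_inv]
        exact Nat.cast_div_le
    _ = (N : ℝ) * ∑ d ∈ Ioc 0 N, (d : ℝ)⁻¹ := by rw [mul_sum]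
    _ ≤ N * (1 + Real.log N) :=
        mul_le_mul_of_nonneg_left (sum_inv_le N) (Nat.cast_nonneg N)



private lemma sum_tau_sq_le' (N : ℕ)
    (sum_inv_le : ∑ d ∈ Finset.Ioc 0 N, (d : ℝ)⁻¹ ≤ 1 + Real.log N) :
    ∑ n ∈ Finset.Ioc 0 N, (n.divisors.card : ℝ) ^ 2 ≤ N * (1 + Real.log N) ^ 3 := by
  classical
  set I := Finset.Ioc 0 N with hI
  have hdf : ∀ n ∈ I, n.divisors = I.filter (· ∣ n) := by
    intro n hn
    simp only [hI, Finset.mem_Ioc] at hn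
    ext d
    simp only [Nat.mem_divisors, Finset.mem_filter, hI, Finset.mem_Ioc]
    constructor
    · rintro ⟨hd, hn0⟩
      exact ⟨⟨Nat.pos_of_dvd_of_pos hd hn.1, le_trans (Nat.le_of_dvd hn.1 hd) hn.2⟩, hd⟩
    · rintro ⟨_, hd⟩
      exact ⟨hd, by omega⟩
  -- step 1: count
  have h1 : ∑ n ∈ I, (n.divisors.card : ℝ) ^ 2
      = ∑ p ∈ I ×ˢ I, ((N / Nat.lcm p.1 p.2 : ℕ) : ℝ) := by
    have hnat : ∑ n ∈ I, (n.divisors.card) ^ 2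
        = ∑ p ∈ I ×ˢ I, (N / Nat.lcm p.1 p.2) := by
      calc ∑ n ∈ I, (n.divisors.card) ^ 2
          = ∑ n ∈ I, ∑ p ∈ I ×ˢ I, (if p.1 ∣ n ∧ p.2 ∣ n then 1 else 0) := by
            refine sum_congr rfl fun n hn => ?_
            rw [hdf n hn, sq, Finset.card_filter, Finset.sum_mul_sum,
              ← Finset.sum_product']
            refine sum_congr rfl fun p _ => ?_
            split_ifs with h1 h2 h3 <;> simp_all
        _ = ∑ p ∈ I ×ˢ I, ∑ n ∈ I, (if p.1 ∣ n ∧ p.2 ∣ n then 1 else 0) :=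
            Finset.sum_comm
        _ = ∑ p ∈ I ×ˢ I, (N / Nat.lcm p.1 p.2) := by
            refine sum_congr rfl fun p _ => ?_
            have heq : ∀ n : ℕ, (p.1 ∣ n ∧ p.2 ∣ n) ↔ (Nat.lcm p.1 p.2 ∣ n) :=
              fun n => Nat.lcm_dvd_iff.symm
            calc ∑ n ∈ I, (if p.1 ∣ n ∧ p.2 ∣ n then 1 else 0)
                = ∑ n ∈ I, (if Nat.lcm p.1 p.2 ∣ n then 1 else 0) :=
                  sum_congr rfl fun n _ => by rw [if_congr (heq n) rfl rfl]
              _ = (I.filter (Nat.lcm p.1 p.2 ∣ ·)).card := (Finset.card_filter _ _).symm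
              _ = N / Nat.lcm p.1 p.2 := Nat.Ioc_filter_dvd_card_eq_div N _
    exact_mod_cast hnat
  rw [h1]
  -- step 2: pass to reals
  have h2 : ∑ p ∈ I ×ˢ I, ((N / Nat.lcm p.1 p.2 : ℕ) : ℝ)
      ≤ (N : ℝ) * ∑ p ∈ I ×ˢ I, (Nat.gcd p.1 p.2 : ℝ) / ((p.1 : ℝ) * p.2) := by
    rw [Finset.mul_sum]
    refine sum_le_sum fun p hp => ?_
    simp only [Finset.mem_product, hI, Finset.mem_Ioc] at hp
    have hp1 : 0 < p.1 := hp.1.1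
    have hp2 : 0 < p.2 := hp.2.1
    have hpR : (0 : ℝ) < (p.1 : ℝ) * p.2 := by
      have := Nat.mul_pos hp1 hp2
      exact_mod_cast this
    have hgl : (Nat.gcd p.1 p.2 : ℝ) * (Nat.lcm p.1 p.2 : ℝ) = (p.1 : ℝ) * p.2 := by
      rw [← Nat.cast_mul, Nat.gcd_mul_lcm]; push_cast; ring
    have hkey : (Nat.gcd p.1 p.2 : ℝ) / ((p.1 : ℝ) * p.2) = ((Nat.lcm p.1 p.2 : ℝ))⁻¹ := by
      have hgne : (Nat.gcd p.1 p.2 : ℝ) ≠ 0 := by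
        have := Nat.gcd_pos_of_pos_left p.2 hp1
        exact_mod_cast this.ne'
      rw [← hgl, div_mul_eq_div_div, div_self hgne, one_div]
    rw [hkey]
    calc ((N / Nat.lcm p.1 p.2 : ℕ) : ℝ) ≤ (N : ℝ) / (Nat.lcm p.1 p.2 : ℝ) :=
          Nat.cast_div_le
      _ = (N : ℝ) * ((Nat.lcm p.1 p.2 : ℝ))⁻¹ := div_eq_mul_inv _ _
  -- step 3: gcd sum ≤ H^3
  have h3 : ∑ p ∈ I ×ˢ I, (Nat.gcd p.1 p.2 : ℝ) / ((p.1 : ℝ) * p.2)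
      ≤ (∑ d ∈ I, (d : ℝ)⁻¹) ^ 3 := by
    set φ : ℕ × ℕ → ℕ × ℕ × ℕ :=
      fun p => (Nat.gcd p.1 p.2, p.1 / Nat.gcd p.1 p.2, p.2 / Nat.gcd p.1 p.2) with hφ
    have hrec : ∀ p ∈ I ×ˢ I, Nat.gcd p.1 p.2 * (p.1 / Nat.gcd p.1 p.2) = p.1
        ∧ Nat.gcd p.1 p.2 * (p.2 / Nat.gcd p.1 p.2) = p.2 := fun p _ =>
      ⟨Nat.mul_div_cancel' (Nat.gcd_dvd_left _ _),
        Nat.mul_div_cancel' (Nat.gcd_dvd_right _ _)⟩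
    have hpos : ∀ p ∈ I ×ˢ I, 0 < Nat.gcd p.1 p.2 ∧ 0 < p.1 / Nat.gcd p.1 p.2
        ∧ 0 < p.2 / Nat.gcd p.1 p.2 := by
      intro p hp
      obtain ⟨e1, e2⟩ := hrec p hp
      simp only [Finset.mem_product, hI, Finset.mem_Ioc] at hp
      have hg : 0 < Nat.gcd p.1 p.2 := Nat.gcd_pos_of_pos_left _ hp.1.1
      refine ⟨hg, ?_, ?_⟩
      · rcases Nat.eq_zero_or_pos (p.1 / Nat.gcd p.1 p.2) with h | h
        · rw [h, Nat.mul_zero] at e1; omega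
        · exact h
      · rcases Nat.eq_zero_or_pos (p.2 / Nat.gcd p.1 p.2) with h | h
        · rw [h, Nat.mul_zero] at e2; omega
        · exact h
    have hval : ∀ p ∈ I ×ˢ I,
        (Nat.gcd p.1 p.2 : ℝ) / ((p.1 : ℝ) * p.2)
          = (((φ p).1 : ℝ) * ((φ p).2.1 : ℝ) * ((φ p).2.2 : ℝ))⁻¹ := by
      intro p hp
      obtain ⟨e1, e2⟩ := hrec p hp
      obtain ⟨hg, ha, hb⟩ := hpos p hp
      show (Nat.gcd p.1 p.2 : ℝ) / ((p.1 : ℝ) * p.2)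
          = ((Nat.gcd p.1 p.2 : ℝ) * ((p.1 / Nat.gcd p.1 p.2 : ℕ) : ℝ)
              * ((p.2 / Nat.gcd p.1 p.2 : ℕ) : ℝ))⁻¹
      have e1R : ((Nat.gcd p.1 p.2 : ℝ)) * ((p.1 / Nat.gcd p.1 p.2 : ℕ) : ℝ) = (p.1 : ℝ) := by
        exact_mod_cast congrArg (Nat.cast : ℕ → ℝ) e1
      have e2R : ((Nat.gcd p.1 p.2 : ℝ)) * ((p.2 / Nat.gcd p.1 p.2 : ℕ) : ℝ) = (p.2 : ℝ) := by
        exact_mod_cast congrArg (Nat.cast : ℕ → ℝ) e2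
      have hgR : (0 : ℝ) < (Nat.gcd p.1 p.2 : ℝ) := by exact_mod_cast hg
      have haR : (0 : ℝ) < ((p.1 / Nat.gcd p.1 p.2 : ℕ) : ℝ) := by exact_mod_cast ha
      have hbR : (0 : ℝ) < ((p.2 / Nat.gcd p.1 p.2 : ℕ) : ℝ) := by exact_mod_cast hb
      rw [← e1R, ← e2R]
      field_simp
    have hinj : ∀ p ∈ I ×ˢ I, ∀ q ∈ I ×ˢ I, φ p = φ q → p = q := by
      intro p hp q hq h
      obtain ⟨e1, e2⟩ := hrec p hp
      obtain ⟨f1, f2⟩ := hrec q hq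
      simp only [hφ, Prod.mk.injEq] at h
      obtain ⟨h1, h2, h3⟩ := h
      have hq1 : p.1 = q.1 := by
        calc p.1 = Nat.gcd p.1 p.2 * (p.1 / Nat.gcd p.1 p.2) := e1.symm
          _ = Nat.gcd q.1 q.2 * (q.1 / Nat.gcd q.1 q.2) := by rw [h2, h1]
          _ = q.1 := f1
      have hq2 : p.2 = q.2 := by
        calc p.2 = Nat.gcd p.1 p.2 * (p.2 / Nat.gcd p.1 p.2) := e2.symm
          _ = Nat.gcd q.1 q.2 * (q.2 / Nat.gcd q.1 q.2) := by rw [h3, h1]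
          _ = q.2 := f2
      exact Prod.ext hq1 hq2
    have hsub : (I ×ˢ I).image φ ⊆ I ×ˢ (I ×ˢ I) := by
      intro q hq
      rw [Finset.mem_image] at hq
      obtain ⟨p, hp, rfl⟩ := hq
      obtain ⟨hg, ha, hb⟩ := hpos p hp
      simp only [Finset.mem_product, hI, Finset.mem_Ioc] at hp ⊢
      exact ⟨⟨hg, le_trans (Nat.le_of_dvd hp.1.1 (Nat.gcd_dvd_left _ _)) hp.1.2⟩,
        ⟨ha, le_trans (Nat.div_le_self _ _) hp.1.2⟩,
        ⟨hb, le_trans (Nat.div_le_self _ _) hp.2.2⟩⟩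
    have hexp : ∑ q ∈ I ×ˢ (I ×ˢ I), ((q.1 : ℝ) * (q.2.1 : ℝ) * (q.2.2 : ℝ))⁻¹
        = (∑ d ∈ I, (d : ℝ)⁻¹) ^ 3 := by
      have hcube : (∑ d ∈ I, (d : ℝ)⁻¹) ^ 3
          = (∑ d ∈ I, (d : ℝ)⁻¹) * ((∑ d ∈ I, (d : ℝ)⁻¹) * (∑ d ∈ I, (d : ℝ)⁻¹)) := by
        ring
      rw [hcube, Finset.sum_product, Finset.sum_mul]
      refine sum_congr rfl fun g _ => ?_
      rw [Finset.sum_product, Finset.sum_mul_sum, Finset.mul_sum]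
      refine sum_congr rfl fun a _ => ?_
      rw [Finset.mul_sum]
      refine sum_congr rfl fun b _ => ?_
      rw [mul_inv, mul_inv]
      ring
    calc ∑ p ∈ I ×ˢ I, (Nat.gcd p.1 p.2 : ℝ) / ((p.1 : ℝ) * p.2)
        = ∑ p ∈ I ×ˢ I, (((φ p).1 : ℝ) * ((φ p).2.1 : ℝ) * ((φ p).2.2 : ℝ))⁻¹ :=
          sum_congr rfl hval
      _ = ∑ q ∈ (I ×ˢ I).image φ, ((q.1 : ℝ) * (q.2.1 : ℝ) * (q.2.2 : ℝ))⁻¹ := by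
          rw [Finset.sum_image hinj]
      _ ≤ ∑ q ∈ I ×ˢ (I ×ˢ I), ((q.1 : ℝ) * (q.2.1 : ℝ) * (q.2.2 : ℝ))⁻¹ := by
          refine Finset.sum_le_sum_of_subset_of_nonneg hsub fun q _ _ => by positivity
      _ = (∑ d ∈ I, (d : ℝ)⁻¹) ^ 3 := hexp
  have hH : 0 ≤ ∑ d ∈ I, (d : ℝ)⁻¹ := sum_nonneg fun d _ => by positivity
  calc ∑ p ∈ I ×ˢ I, ((N / Nat.lcm p.1 p.2 : ℕ) : ℝ)
      ≤ (N : ℝ) * ∑ p ∈ I ×ˢ I, (Nat.gcd p.1 p.2 : ℝ) / ((p.1 : ℝ) * p.2) := h2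
    _ ≤ (N : ℝ) * (∑ d ∈ I, (d : ℝ)⁻¹) ^ 3 :=
        mul_le_mul_of_nonneg_left h3 (Nat.cast_nonneg N)
    _ ≤ N * (1 + Real.log N) ^ 3 := by
        refine mul_le_mul_of_nonneg_left ?_ (Nat.cast_nonneg N)
        exact pow_le_pow_left₀ hH sum_inv_le 3



private lemma fiber_card_le (v : ℤ) (hv : v ≠ 0) (s : Finset (ℤ × ℤ)) :
    ((s.filter fun p => p.1 * p.2 = v).card : ℝ) ≤ 2 * (v.natAbs.divisors.card : ℝ) := by
  classical
  have key : (s.filter fun p => p.1 * p.2 = v).card ≤ 2 * v.natAbs.divisors.card := by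
    set t := v.natAbs.divisors.image (fun d : ℕ => (d : ℤ))
        ∪ v.natAbs.divisors.image (fun d : ℕ => -(d : ℤ)) with ht
    have hcard : t.card ≤ 2 * v.natAbs.divisors.card := by
      refine (Finset.card_union_le _ _).trans ?_
      have h1 := Finset.card_image_le (s := v.natAbs.divisors) (f := fun d : ℕ => (d : ℤ))
      have h2 := Finset.card_image_le (s := v.natAbs.divisors) (f := fun d : ℕ => -(d : ℤ))
      omega
    refine le_trans (Finset.card_le_card_of_injOn (fun p => p.1) ?_ ?_) hcard
    · intro p hp
      rw [Finset.mem_coe, Finset.mem_filter] at hp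
      have hdvd : p.1 ∣ v := ⟨p.2, hp.2.symm⟩
      have h1 : p.1 ≠ 0 := by
        rintro h0
        rw [h0, zero_mul] at hp
        exact hv hp.2.symm
      have h2 : p.1.natAbs ∈ v.natAbs.divisors :=
        Nat.mem_divisors.mpr ⟨Int.natAbs_dvd_natAbs.mpr hdvd, Int.natAbs_ne_zero.mpr hv⟩
      rcases Int.natAbs_eq p.1 with h | h
      · exact Finset.mem_union_left _ (Finset.mem_image.mpr ⟨_, h2, h.symm⟩)
      · exact Finset.mem_union_right _ (Finset.mem_image.mpr ⟨_, h2, h.symm⟩)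
    · intro p hp q hq hpq
      simp only [Finset.coe_filter, Set.mem_setOf_eq] at hp hq
      have h1 : p.1 ≠ 0 := by
        rintro h0
        rw [h0, zero_mul] at hp
        exact hv hp.2.symm
      have hpq' : p.1 = q.1 := hpq
      have heq : p.1 * p.2 = p.1 * q.2 := by rw [hp.2, ← hq.2, hpq']
      exact Prod.ext hpq' (mul_left_cancel₀ h1 heq)
  calc ((s.filter fun p => p.1 * p.2 = v).card : ℝ)
      ≤ ((2 * v.natAbs.divisors.card : ℕ) : ℝ) := by exact_mod_cast key
    _ = 2 * (v.natAbs.divisors.card : ℝ) := by push_cast; ring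

private lemma group_sum (A B M : ℕ) (hM : A * B ≤ M) (f : ℤ → ℝ) (hf : ∀ v, 0 ≤ f v) :
    ∑ p ∈ ((Finset.Icc (-(A : ℤ)) A).erase 0) ×ˢ ((Finset.Icc (-(B : ℤ)) B).erase 0),
        f (p.1 * p.2)
      ≤ ∑ v ∈ (Finset.Icc (-(M : ℤ)) M).erase 0,
          2 * (v.natAbs.divisors.card : ℝ) * f v := by
  classical
  set s := ((Finset.Icc (-(A : ℤ)) A).erase 0) ×ˢ ((Finset.Icc (-(B : ℤ)) B).erase 0) with hs
  have hmaps : ∀ p ∈ s, p.1 * p.2 ∈ (Finset.Icc (-(M : ℤ)) M).erase 0 := by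
    intro p hp
    simp only [hs, Finset.mem_product, Finset.mem_erase, Finset.mem_Icc] at hp
    obtain ⟨⟨h1, h2, h3⟩, h4, h5, h6⟩ := hp
    rw [Finset.mem_erase, Finset.mem_Icc, ← abs_le]
    refine ⟨mul_ne_zero h1 h4, ?_⟩
    rw [abs_mul]
    calc |p.1| * |p.2| ≤ (A : ℤ) * B := by
          refine mul_le_mul (abs_le.mpr ⟨h2, h3⟩) (abs_le.mpr ⟨h5, h6⟩)
            (abs_nonneg _) (by positivity)
      _ ≤ (M : ℤ) := by exact_mod_cast hM
  rw [← Finset.sum_fiberwise_of_maps_to hmaps]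
  refine Finset.sum_le_sum fun v hv => ?_
  have hv0 : v ≠ 0 := (Finset.mem_erase.mp hv).1
  calc ∑ p ∈ s.filter fun p => p.1 * p.2 = v, f (p.1 * p.2)
      = ∑ p ∈ s.filter fun p => p.1 * p.2 = v, f v :=
        sum_congr rfl fun p hp => by rw [(Finset.mem_filter.mp hp).2]
    _ = ((s.filter fun p => p.1 * p.2 = v).card : ℝ) * f v := by
        rw [Finset.sum_const, nsmul_eq_mul]
    _ ≤ 2 * (v.natAbs.divisors.card : ℝ) * f v :=
        mul_le_mul_of_nonneg_right (fiber_card_le v hv0 s) (hf v)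

private lemma sum_abs_le (K : ℕ) (h : ℕ → ℝ) (hh : ∀ n, 0 ≤ h n) (h0 : h 0 = 0) :
    ∑ d ∈ Finset.Icc (-(K : ℤ)) K, h d.natAbs ≤ 2 * ∑ n ∈ Finset.Ioc 0 K, h n := by
  classical
  have hmaps : ∀ d ∈ Finset.Icc (-(K : ℤ)) K, d.natAbs ∈ Finset.Icc 0 K := by
    intro d hd
    rw [Finset.mem_Icc] at hd ⊢
    omega
  rw [← Finset.sum_fiberwise_of_maps_to hmaps]
  have hstep : ∀ n ∈ Finset.Icc 0 K,
      ∑ d ∈ (Finset.Icc (-(K : ℤ)) K).filter fun d => d.natAbs = n, h d.natAbs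
        ≤ 2 * h n := by
    intro n _
    calc ∑ d ∈ (Finset.Icc (-(K : ℤ)) K).filter fun d => d.natAbs = n, h d.natAbs
        = ∑ d ∈ (Finset.Icc (-(K : ℤ)) K).filter fun d => d.natAbs = n, h n :=
          sum_congr rfl fun d hd => by rw [(Finset.mem_filter.mp hd).2]
      _ = (((Finset.Icc (-(K : ℤ)) K).filter fun d => d.natAbs = n).card : ℝ) * h n := by
          rw [Finset.sum_const, nsmul_eq_mul]
      _ ≤ 2 * h n := by
          refine mul_le_mul_of_nonneg_right ?_ (hh n)
          have hsub : ((Finset.Icc (-(K : ℤ)) K).filter fun d => d.natAbs = n)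
              ⊆ {(n : ℤ), -(n : ℤ)} := by
            intro d hd
            have := (Finset.mem_filter.mp hd).2
            rw [Finset.mem_insert, Finset.mem_singleton]
            rcases Int.natAbs_eq d with he | he
            · exact Or.inl (by rw [he, this])
            · exact Or.inr (by rw [he, this])
          calc (((Finset.Icc (-(K : ℤ)) K).filter fun d => d.natAbs = n).card : ℝ)
              ≤ (({(n : ℤ), -(n : ℤ)} : Finset ℤ).card : ℝ) := by
                exact_mod_cast Finset.card_le_card hsub
            _ ≤ 2 := by
                have := Finset.card_insert_le (n : ℤ) ({-(n : ℤ)} : Finset ℤ)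
                simp only [Finset.card_singleton] at this
                exact_mod_cast this
  calc ∑ n ∈ Finset.Icc 0 K,
        ∑ d ∈ (Finset.Icc (-(K : ℤ)) K).filter fun d => d.natAbs = n, h d.natAbs
      ≤ ∑ n ∈ Finset.Icc 0 K, 2 * h n := Finset.sum_le_sum hstep
    _ = 2 * ∑ n ∈ Finset.Icc 0 K, h n := (Finset.mul_sum _ _ _).symm
    _ = 2 * ∑ n ∈ Finset.Ioc 0 K, h n := by
        rw [← Finset.sum_erase_add (Finset.Icc 0 K) h (Finset.mem_Icc.mpr ⟨le_refl 0, Nat.zero_le K⟩),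
          Finset.Icc_erase_left, h0, add_zero]

private lemma calc_helper {Q T S2 Mr L : ℝ} (hQnn : 0 ≤ Q) (hTnn : 0 ≤ T)
    (hMr : 0 ≤ Mr) (hL : 0 ≤ L)
    (hQ : Q ≤ 2 * S2) (hS2 : S2 ≤ Mr * L ^ 3) (hT : T ≤ 2 * Mr * L) :
    2 * (Q * (4 * T)) ≤ 32 * Mr ^ 2 * L ^ 4 := by
  have hb : (0 : ℝ) ≤ 2 * (Mr * L ^ 3) := by
    have := mul_nonneg hMr (pow_nonneg hL 3); linarith
  have h1 : Q ≤ 2 * (Mr * L ^ 3) := by linarith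
  have h2 : 4 * T ≤ 4 * (2 * Mr * L) := by linarith
  have h3 : Q * (4 * T) ≤ (2 * (Mr * L ^ 3)) * (4 * (2 * Mr * L)) :=
    mul_le_mul h1 h2 (by linarith) hb
  calc 2 * (Q * (4 * T)) ≤ 2 * ((2 * (Mr * L ^ 3)) * (4 * (2 * Mr * L))) := by linarith
    _ = 32 * Mr ^ 2 * L ^ 4 := by ring

private lemma natAbs_sub_comm' (a b : ℤ) : (a - b).natAbs = (b - a).natAbs := by
  rw [← Int.natAbs_neg, neg_sub]

set_option maxHeartbeats 1000000 in
private lemma main_comb (A B : ℕ) (hAB : 1 ≤ A * B) :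
    ∑ x ∈ (Finset.Icc (-(A : ℤ)) A).erase 0, ∑ y ∈ (Finset.Icc (-(A : ℤ)) A).erase 0,
      ∑ z ∈ (Finset.Icc (-(B : ℤ)) B).erase 0, ∑ w ∈ (Finset.Icc (-(B : ℤ)) B).erase 0,
        (((x * z - y * w).natAbs.divisors.card : ℝ))
      ≤ 32 * ((A * B : ℕ) : ℝ) ^ 2 * (1 + Real.log (2 * ((A * B : ℕ) : ℝ))) ^ 4 := by
  classical
  set M : ℕ := A * B with hM
  set I₁ := (Finset.Icc (-(A : ℤ)) A).erase 0 with hI₁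
  set I₂ := (Finset.Icc (-(B : ℤ)) B).erase 0 with hI₂
  set V := (Finset.Icc (-(M : ℤ)) M).erase 0 with hV
  have htRnn : ∀ v : ℤ, 0 ≤ (v.natAbs.divisors.card : ℝ) := fun v => Nat.cast_nonneg _
  -- reorder into pair sums
  have hre : ∑ x ∈ I₁, ∑ y ∈ I₁, ∑ z ∈ I₂, ∑ w ∈ I₂,
        ((x * z - y * w).natAbs.divisors.card : ℝ)
      = ∑ p ∈ I₁ ×ˢ I₂, ∑ q ∈ I₁ ×ˢ I₂,
          (((p.1 * p.2 - q.1 * q.2).natAbs.divisors.card : ℝ)) := by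
    rw [Finset.sum_product]
    refine Finset.sum_congr rfl fun x _ => ?_
    calc ∑ y ∈ I₁, ∑ z ∈ I₂, ∑ w ∈ I₂, ((x * z - y * w).natAbs.divisors.card : ℝ)
        = ∑ z ∈ I₂, ∑ y ∈ I₁, ∑ w ∈ I₂, ((x * z - y * w).natAbs.divisors.card : ℝ) :=
          Finset.sum_comm
      _ = ∑ z ∈ I₂, ∑ q ∈ I₁ ×ˢ I₂, ((x * z - q.1 * q.2).natAbs.divisors.card : ℝ) := by
          refine Finset.sum_congr rfl fun z _ => ?_
          rw [Finset.sum_product]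
  rw [hre]
  -- grouping
  set g : ℤ → ℝ := fun u => ∑ v ∈ V,
    2 * (v.natAbs.divisors.card : ℝ) * ((u - v).natAbs.divisors.card : ℝ) with hg
  have hgnn : ∀ u, 0 ≤ g u := fun u => Finset.sum_nonneg fun v _ => by positivity
  have step1 : ∑ p ∈ I₁ ×ˢ I₂, ∑ q ∈ I₁ ×ˢ I₂,
        (((p.1 * p.2 - q.1 * q.2).natAbs.divisors.card : ℝ))
      ≤ ∑ p ∈ I₁ ×ˢ I₂, g (p.1 * p.2) := by
    refine Finset.sum_le_sum fun p _ => ?_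
    exact group_sum A B M (le_of_eq hM.symm)
      (fun v => (((p.1 * p.2 - v).natAbs.divisors.card : ℝ))) (fun v => htRnn _)
  have step2 : ∑ p ∈ I₁ ×ˢ I₂, g (p.1 * p.2)
      ≤ ∑ u ∈ V, 2 * (u.natAbs.divisors.card : ℝ) * g u :=
    group_sum A B M (le_of_eq hM.symm) g hgnn
  have step3 : ∑ u ∈ V, 2 * (u.natAbs.divisors.card : ℝ) * g u
      = ∑ u ∈ V, ∑ v ∈ V, 2 * (u.natAbs.divisors.card : ℝ) *
          (2 * (v.natAbs.divisors.card : ℝ) * ((u - v).natAbs.divisors.card : ℝ)) :=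
    Finset.sum_congr rfl fun u _ => by rw [hg, Finset.mul_sum]
  -- AM-GM
  have step4 : ∑ u ∈ V, ∑ v ∈ V, 2 * (u.natAbs.divisors.card : ℝ) *
          (2 * (v.natAbs.divisors.card : ℝ) * ((u - v).natAbs.divisors.card : ℝ))
      ≤ ∑ u ∈ V, ∑ v ∈ V,
          (2 * (u.natAbs.divisors.card : ℝ) ^ 2 * ((u - v).natAbs.divisors.card : ℝ)
            + 2 * (v.natAbs.divisors.card : ℝ) ^ 2 * ((u - v).natAbs.divisors.card : ℝ)) := by
    refine Finset.sum_le_sum fun u _ => Finset.sum_le_sum fun v _ => ?_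
    have h1 := htRnn u
    have h2 := htRnn v
    have h3 := htRnn (u - v)
    nlinarith [mul_nonneg (sq_nonneg ((u.natAbs.divisors.card : ℝ)
      - (v.natAbs.divisors.card : ℝ))) h3]
  -- symmetrize
  have step5 : ∑ u ∈ V, ∑ v ∈ V,
        (2 * (u.natAbs.divisors.card : ℝ) ^ 2 * ((u - v).natAbs.divisors.card : ℝ)
          + 2 * (v.natAbs.divisors.card : ℝ) ^ 2 * ((u - v).natAbs.divisors.card : ℝ))
      = 2 * ∑ u ∈ V, ∑ v ∈ V,
          2 * (u.natAbs.divisors.card : ℝ) ^ 2 * ((u - v).natAbs.divisors.card : ℝ) := by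
    calc ∑ u ∈ V, ∑ v ∈ V,
          (2 * (u.natAbs.divisors.card : ℝ) ^ 2 * ((u - v).natAbs.divisors.card : ℝ)
            + 2 * (v.natAbs.divisors.card : ℝ) ^ 2 * ((u - v).natAbs.divisors.card : ℝ))
        = (∑ u ∈ V, ∑ v ∈ V,
            2 * (u.natAbs.divisors.card : ℝ) ^ 2 * ((u - v).natAbs.divisors.card : ℝ))
          + ∑ u ∈ V, ∑ v ∈ V,
            2 * (v.natAbs.divisors.card : ℝ) ^ 2 * ((u - v).natAbs.divisors.card : ℝ) := by
          rw [← Finset.sum_add_distrib]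
          exact Finset.sum_congr rfl fun u _ => Finset.sum_add_distrib
      _ = 2 * ∑ u ∈ V, ∑ v ∈ V,
            2 * (u.natAbs.divisors.card : ℝ) ^ 2 * ((u - v).natAbs.divisors.card : ℝ) := by
          have hsw : ∑ u ∈ V, ∑ v ∈ V,
              2 * (v.natAbs.divisors.card : ℝ) ^ 2 * ((u - v).natAbs.divisors.card : ℝ)
            = ∑ u ∈ V, ∑ v ∈ V,
              2 * (u.natAbs.divisors.card : ℝ) ^ 2 * ((u - v).natAbs.divisors.card : ℝ) := by
            rw [Finset.sum_comm]
            exact Finset.sum_congr rfl fun u _ => Finset.sum_congr rfl fun v _ => by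
              rw [natAbs_sub_comm' v u]
          rw [hsw]; ring
  -- inner sum bound
  have hVsub : V ⊆ Finset.Icc (-(M : ℤ)) M := Finset.erase_subset _ _
  have hinner : ∀ u ∈ V, ∑ v ∈ V, (((u - v).natAbs.divisors.card : ℝ))
      ≤ 2 * ∑ n ∈ Finset.Ioc 0 (2 * M), (n.divisors.card : ℝ) := by
    intro u hu
    have hu' := Finset.mem_Icc.mp (hVsub hu)
    have hmapsub : ∀ v ∈ V, u - v ∈ Finset.Icc (-((2 * M : ℕ) : ℤ)) ((2 * M : ℕ) : ℤ) := by
      intro v hv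
      have hv' := Finset.mem_Icc.mp (hVsub hv)
      rw [Finset.mem_Icc]
      push_cast
      omega
    calc ∑ v ∈ V, (((u - v).natAbs.divisors.card : ℝ))
        = ∑ d ∈ V.image (fun v => u - v), ((d.natAbs.divisors.card : ℝ)) := by
          rw [Finset.sum_image fun a _ b _ h => by omega]
      _ ≤ ∑ d ∈ Finset.Icc (-((2 * M : ℕ) : ℤ)) ((2 * M : ℕ) : ℤ),
            ((d.natAbs.divisors.card : ℝ)) := by
          refine Finset.sum_le_sum_of_subset_of_nonneg ?_ fun d _ _ => htRnn d
          intro d hd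
          rw [Finset.mem_image] at hd
          obtain ⟨v, hv, rfl⟩ := hd
          exact hmapsub v hv
      _ ≤ 2 * ∑ n ∈ Finset.Ioc 0 (2 * M), (n.divisors.card : ℝ) :=
          sum_abs_le (2 * M) (fun n => (n.divisors.card : ℝ)) (fun n => Nat.cast_nonneg _)
            (by simp [Nat.divisors_zero])
  -- square sum bound
  have hsq : ∑ u ∈ V, ((u.natAbs.divisors.card : ℝ)) ^ 2
      ≤ 2 * ∑ n ∈ Finset.Ioc 0 M, (n.divisors.card : ℝ) ^ 2 := by
    calc ∑ u ∈ V, ((u.natAbs.divisors.card : ℝ)) ^ 2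
        ≤ ∑ u ∈ Finset.Icc (-(M : ℤ)) M, ((u.natAbs.divisors.card : ℝ)) ^ 2 :=
          Finset.sum_le_sum_of_subset_of_nonneg hVsub fun u _ _ => by positivity
      _ ≤ 2 * ∑ n ∈ Finset.Ioc 0 M, (n.divisors.card : ℝ) ^ 2 :=
          sum_abs_le M (fun n => (n.divisors.card : ℝ) ^ 2) (fun n => by positivity)
            (by simp [Nat.divisors_zero])
  -- numeric bounds
  set L : ℝ := 1 + Real.log (2 * (M : ℝ)) with hL
  have hM1 : (1 : ℝ) ≤ (M : ℝ) := by exact_mod_cast hAB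
  have hlognn : 0 ≤ Real.log (2 * (M : ℝ)) := Real.log_nonneg (by linarith)
  have hLnn : (0 : ℝ) ≤ L := by rw [hL]; linarith
  have hT1 : ∑ n ∈ Finset.Ioc 0 (2 * M), (n.divisors.card : ℝ) ≤ 2 * (M : ℝ) * L := by
    have := sum_tau_le (2 * M)
    have hcast : ((2 * M : ℕ) : ℝ) = 2 * (M : ℝ) := by push_cast; ring
    rw [hcast] at this
    exact this
  have hT2 : ∑ n ∈ Finset.Ioc 0 M, (n.divisors.card : ℝ) ^ 2 ≤ (M : ℝ) * L ^ 3 := by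
    have h := sum_tau_sq_le' M (sum_inv_le M)
    have hmono : (1 : ℝ) + Real.log (M : ℝ) ≤ L := by
      rw [hL]
      have : Real.log (M : ℝ) ≤ Real.log (2 * (M : ℝ)) :=
        Real.log_le_log (by linarith) (by linarith)
      linarith
    calc ∑ n ∈ Finset.Ioc 0 M, (n.divisors.card : ℝ) ^ 2
        ≤ (M : ℝ) * (1 + Real.log (M : ℝ)) ^ 3 := h
      _ ≤ (M : ℝ) * L ^ 3 := by
          refine mul_le_mul_of_nonneg_left ?_ (by linarith)
          refine pow_le_pow_left₀ ?_ hmono 3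
          have : (0:ℝ) ≤ Real.log (M:ℝ) := Real.log_nonneg hM1
          linarith
  have hT1nn : 0 ≤ ∑ n ∈ Finset.Ioc 0 (2 * M), (n.divisors.card : ℝ) :=
    Finset.sum_nonneg fun n _ => Nat.cast_nonneg _
  have hsqnn : 0 ≤ ∑ u ∈ V, ((u.natAbs.divisors.card : ℝ)) ^ 2 :=
    Finset.sum_nonneg fun u _ => by positivity
  -- combine
  have step6 : ∑ u ∈ V, ∑ v ∈ V,
        2 * (u.natAbs.divisors.card : ℝ) ^ 2 * ((u - v).natAbs.divisors.card : ℝ)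
      ≤ (∑ u ∈ V, ((u.natAbs.divisors.card : ℝ)) ^ 2)
          * (4 * ∑ n ∈ Finset.Ioc 0 (2 * M), (n.divisors.card : ℝ)) := by
    calc ∑ u ∈ V, ∑ v ∈ V,
          2 * (u.natAbs.divisors.card : ℝ) ^ 2 * ((u - v).natAbs.divisors.card : ℝ)
        = ∑ u ∈ V, 2 * (u.natAbs.divisors.card : ℝ) ^ 2
            * ∑ v ∈ V, ((u - v).natAbs.divisors.card : ℝ) :=
          Finset.sum_congr rfl fun u _ => by rw [Finset.mul_sum]
      _ ≤ ∑ u ∈ V, 2 * (u.natAbs.divisors.card : ℝ) ^ 2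
            * (2 * ∑ n ∈ Finset.Ioc 0 (2 * M), (n.divisors.card : ℝ)) := by
          refine Finset.sum_le_sum fun u hu => ?_
          exact mul_le_mul_of_nonneg_left (hinner u hu) (by positivity)
      _ = (∑ u ∈ V, ((u.natAbs.divisors.card : ℝ)) ^ 2)
            * (4 * ∑ n ∈ Finset.Ioc 0 (2 * M), (n.divisors.card : ℝ)) := by
          rw [Finset.sum_mul]
          exact Finset.sum_congr rfl fun u _ => by ring
  calc ∑ p ∈ I₁ ×ˢ I₂, ∑ q ∈ I₁ ×ˢ I₂,
        (((p.1 * p.2 - q.1 * q.2).natAbs.divisors.card : ℝ))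
      ≤ ∑ u ∈ V, 2 * (u.natAbs.divisors.card : ℝ) * g u := le_trans step1 step2
    _ = ∑ u ∈ V, ∑ v ∈ V, 2 * (u.natAbs.divisors.card : ℝ) *
          (2 * (v.natAbs.divisors.card : ℝ) * ((u - v).natAbs.divisors.card : ℝ)) := step3
    _ ≤ ∑ u ∈ V, ∑ v ∈ V,
          (2 * (u.natAbs.divisors.card : ℝ) ^ 2 * ((u - v).natAbs.divisors.card : ℝ)
            + 2 * (v.natAbs.divisors.card : ℝ) ^ 2 * ((u - v).natAbs.divisors.card : ℝ)) :=
        step4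
    _ = 2 * ∑ u ∈ V, ∑ v ∈ V,
          2 * (u.natAbs.divisors.card : ℝ) ^ 2 * ((u - v).natAbs.divisors.card : ℝ) := step5
    _ ≤ 2 * ((∑ u ∈ V, ((u.natAbs.divisors.card : ℝ)) ^ 2)
          * (4 * ∑ n ∈ Finset.Ioc 0 (2 * M), (n.divisors.card : ℝ))) :=
        mul_le_mul_of_nonneg_left step6 (by norm_num)
    _ ≤ 32 * (M : ℝ) ^ 2 * L ^ 4 :=
        calc_helper hsqnn hT1nn (Nat.cast_nonneg M) hLnn hsq hT2 hT1

private lemma numeric_glue (β s₁ s₂ : ℝ) (hβ : 0 < β) (hs₁ : 1 ≤ s₁) (hs₂ : 1 ≤ s₂)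
    (A B : ℕ) (hAB : 1 ≤ A * B)
    (hAle : (A : ℝ) ≤ (β + 1) * s₁) (hBle : (B : ℝ) ≤ (β + 1) * s₂) :
    32 * ((A * B : ℕ) : ℝ) ^ 2 * (1 + Real.log (2 * ((A * B : ℕ) : ℝ))) ^ 4
      ≤ (32 * (β + 1) ^ 4 * (2 + Real.log (2 * (β + 1) ^ 2)) ^ 4)
          * s₁ ^ 2 * s₂ ^ 2 * (Real.log (s₁ * s₂ + 2)) ^ 4 := by
  have hc1 : (1 : ℝ) ≤ 2 * (β + 1) ^ 2 := by nlinarith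
  have hlogc : 0 ≤ Real.log (2 * (β + 1) ^ 2) := Real.log_nonneg hc1
  set K : ℝ := 2 + Real.log (2 * (β + 1) ^ 2) with hKdef
  set L : ℝ := Real.log (s₁ * s₂ + 2) with hLdef
  have hs₁0 : (0 : ℝ) < s₁ := by linarith
  have hs₂0 : (0 : ℝ) < s₂ := by linarith
  have hs₁s₂ : (1 : ℝ) ≤ s₁ * s₂ := by nlinarith
  have hL1 : (1 : ℝ) ≤ L := by
    rw [hLdef, Real.le_log_iff_exp_le (by linarith)]
    have := Real.exp_one_lt_d9
    linarith
  have hABR : (1 : ℝ) ≤ ((A * B : ℕ) : ℝ) := by exact_mod_cast hAB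
  have hMle : ((A * B : ℕ) : ℝ) ≤ (β + 1) ^ 2 * (s₁ * s₂) := by
    push_cast
    calc (A : ℝ) * B ≤ ((β + 1) * s₁) * ((β + 1) * s₂) :=
          mul_le_mul hAle hBle (Nat.cast_nonneg B)
            (mul_nonneg (by linarith) (by linarith))
      _ = (β + 1) ^ 2 * (s₁ * s₂) := by ring
  have hmain : 1 + Real.log (2 * ((A * B : ℕ) : ℝ)) ≤ K * L := by
    have hstep : Real.log (2 * ((A * B : ℕ) : ℝ))
        ≤ Real.log (2 * (β + 1) ^ 2) + Real.log (s₁ * s₂) := by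
      calc Real.log (2 * ((A * B : ℕ) : ℝ))
          ≤ Real.log ((2 * (β + 1) ^ 2) * (s₁ * s₂)) := by
            refine Real.log_le_log (by linarith) ?_
            nlinarith
        _ = Real.log (2 * (β + 1) ^ 2) + Real.log (s₁ * s₂) :=
            Real.log_mul (by nlinarith) (by nlinarith)
    have hlss : Real.log (s₁ * s₂) ≤ L := by
      rw [hLdef]
      exact Real.log_le_log (by linarith) (by linarith)
    have hprod : 0 ≤ Real.log (2 * (β + 1) ^ 2) * (L - 1) :=
      mul_nonneg hlogc (by linarith)
    rw [hKdef]
    nlinarith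
  have h14 : (0 : ℝ) ≤ 1 + Real.log (2 * ((A * B : ℕ) : ℝ)) := by
    have : 0 ≤ Real.log (2 * ((A * B : ℕ) : ℝ)) := Real.log_nonneg (by linarith)
    linarith
  have e1 : ((A * B : ℕ) : ℝ) ^ 2 ≤ ((β + 1) ^ 2 * (s₁ * s₂)) ^ 2 :=
    pow_le_pow_left₀ (Nat.cast_nonneg _) hMle 2
  have e2 : (1 + Real.log (2 * ((A * B : ℕ) : ℝ))) ^ 4 ≤ (K * L) ^ 4 :=
    pow_le_pow_left₀ h14 hmain 4
  have e3 : (0 : ℝ) ≤ (1 + Real.log (2 * ((A * B : ℕ) : ℝ))) ^ 4 := by positivity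
  have e4 : (0 : ℝ) ≤ 32 * ((β + 1) ^ 2 * (s₁ * s₂)) ^ 2 := by positivity
  calc 32 * ((A * B : ℕ) : ℝ) ^ 2 * (1 + Real.log (2 * ((A * B : ℕ) : ℝ))) ^ 4
      ≤ 32 * ((β + 1) ^ 2 * (s₁ * s₂)) ^ 2
          * (1 + Real.log (2 * ((A * B : ℕ) : ℝ))) ^ 4 := by
        refine mul_le_mul_of_nonneg_right ?_ e3
        linarith
    _ ≤ 32 * ((β + 1) ^ 2 * (s₁ * s₂)) ^ 2 * (K * L) ^ 4 :=
        mul_le_mul_of_nonneg_left e2 e4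
    _ = (32 * (β + 1) ^ 4 * K ^ 4) * s₁ ^ 2 * s₂ ^ 2 * L ^ 4 := by ring

open Classical in
/-- Let `β > 0` and `s₁, s₂ ≥ 1`. Then `∑ τ(xz − yw) ≪ s₁²s₂²(log(s₁s₂+2))⁴`, where the
sum is over integers `x, y` with `1 ≤ |x|, |y| ≤ βs₁` and `z, w` with
`1 ≤ |z|, |w| ≤ βs₂` satisfying `xz − yw ≠ 0`; the implied constant depends only on
`β`. -/
theorem sum_tau_of_minors (β : ℝ) (hβ : 0 < β) :
    ∃ C : ℝ, 0 < C ∧ ∀ s₁ s₂ : ℝ, 1 ≤ s₁ → 1 ≤ s₂ →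
      ∑ x ∈ Finset.Icc (-(⌈β * s₁⌉₊ : ℤ)) (⌈β * s₁⌉₊ : ℤ),
        ∑ y ∈ Finset.Icc (-(⌈β * s₁⌉₊ : ℤ)) (⌈β * s₁⌉₊ : ℤ),
          ∑ z ∈ Finset.Icc (-(⌈β * s₂⌉₊ : ℤ)) (⌈β * s₂⌉₊ : ℤ),
            ∑ w ∈ Finset.Icc (-(⌈β * s₂⌉₊ : ℤ)) (⌈β * s₂⌉₊ : ℤ),
              (if 1 ≤ |(x : ℝ)| ∧ |(x : ℝ)| ≤ β * s₁ ∧ 1 ≤ |(y : ℝ)| ∧ |(y : ℝ)| ≤ β * s₁ ∧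
                  1 ≤ |(z : ℝ)| ∧ |(z : ℝ)| ≤ β * s₂ ∧ 1 ≤ |(w : ℝ)| ∧ |(w : ℝ)| ≤ β * s₂ ∧
                  x * z - y * w ≠ 0
                then ((x * z - y * w).natAbs.divisors.card : ℝ) else 0)
        ≤ C * s₁ ^ 2 * s₂ ^ 2 * (Real.log (s₁ * s₂ + 2)) ^ 4 := by
  have hc1 : (1 : ℝ) ≤ 2 * (β + 1) ^ 2 := by nlinarith
  have hlogc : 0 ≤ Real.log (2 * (β + 1) ^ 2) := Real.log_nonneg hc1
  have hK : (0:ℝ) < 2 + Real.log (2 * (β + 1) ^ 2) := by linarith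
  refine ⟨32 * (β + 1) ^ 4 * (2 + Real.log (2 * (β + 1) ^ 2)) ^ 4, ?_, ?_⟩
  · have h1 : (0 : ℝ) < 32 * (β + 1) ^ 4 := by positivity
    exact mul_pos h1 (pow_pos hK 4)
  intro s₁ s₂ hs₁ hs₂
  set A : ℕ := ⌈β * s₁⌉₊ with hA
  set B : ℕ := ⌈β * s₂⌉₊ with hB
  have hA1 : 1 ≤ A := Nat.one_le_iff_ne_zero.mpr (by
    have : 0 < A := by rw [hA]; exact Nat.ceil_pos.mpr (by positivity)
    omega)
  have hB1 : 1 ≤ B := Nat.one_le_iff_ne_zero.mpr (by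
    have : 0 < B := by rw [hB]; exact Nat.ceil_pos.mpr (by positivity)
    omega)
  have hAB : 1 ≤ A * B := Nat.one_le_iff_ne_zero.mpr (by positivity)
  set b₁ := Finset.Icc (-(A : ℤ)) (A : ℤ) with hb₁
  set b₂ := Finset.Icc (-(B : ℤ)) (B : ℤ) with hb₂
  -- pointwise bound
  have hpoint : ∀ x y z w : ℤ,
      (if 1 ≤ |(x : ℝ)| ∧ |(x : ℝ)| ≤ β * s₁ ∧ 1 ≤ |(y : ℝ)| ∧ |(y : ℝ)| ≤ β * s₁ ∧
          1 ≤ |(z : ℝ)| ∧ |(z : ℝ)| ≤ β * s₂ ∧ 1 ≤ |(w : ℝ)| ∧ |(w : ℝ)| ≤ β * s₂ ∧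
          x * z - y * w ≠ 0
        then ((x * z - y * w).natAbs.divisors.card : ℝ) else 0)
      ≤ (if w ≠ 0 then if z ≠ 0 then if y ≠ 0 then if x ≠ 0 then
          ((x * z - y * w).natAbs.divisors.card : ℝ) else 0 else 0 else 0 else 0) := by
    intro x y z w
    by_cases hcnd : 1 ≤ |(x : ℝ)| ∧ |(x : ℝ)| ≤ β * s₁ ∧ 1 ≤ |(y : ℝ)| ∧ |(y : ℝ)| ≤ β * s₁ ∧
        1 ≤ |(z : ℝ)| ∧ |(z : ℝ)| ≤ β * s₂ ∧ 1 ≤ |(w : ℝ)| ∧ |(w : ℝ)| ≤ β * s₂ ∧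
        x * z - y * w ≠ 0
    · rw [if_pos hcnd]
      obtain ⟨h1, _, h2, _, h3, _, h4, _, _⟩ := hcnd
      have hx : x ≠ 0 := by rintro rfl; norm_num at h1
      have hy : y ≠ 0 := by rintro rfl; norm_num at h2
      have hz : z ≠ 0 := by rintro rfl; norm_num at h3
      have hw : w ≠ 0 := by rintro rfl; norm_num at h4
      rw [if_pos hw, if_pos hz, if_pos hy, if_pos hx]
    · rw [if_neg hcnd]
      split_ifs <;> positivity
  have hb : ∑ x ∈ b₁, ∑ y ∈ b₁, ∑ z ∈ b₂, ∑ w ∈ b₂,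
      (if 1 ≤ |(x : ℝ)| ∧ |(x : ℝ)| ≤ β * s₁ ∧ 1 ≤ |(y : ℝ)| ∧ |(y : ℝ)| ≤ β * s₁ ∧
          1 ≤ |(z : ℝ)| ∧ |(z : ℝ)| ≤ β * s₂ ∧ 1 ≤ |(w : ℝ)| ∧ |(w : ℝ)| ≤ β * s₂ ∧
          x * z - y * w ≠ 0
        then ((x * z - y * w).natAbs.divisors.card : ℝ) else 0)
      ≤ ∑ x ∈ b₁, ∑ y ∈ b₁, ∑ z ∈ b₂, ∑ w ∈ b₂,
        (if w ≠ 0 then if z ≠ 0 then if y ≠ 0 then if x ≠ 0 then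
          ((x * z - y * w).natAbs.divisors.card : ℝ) else 0 else 0 else 0 else 0) :=
    Finset.sum_le_sum fun x _ => Finset.sum_le_sum fun y _ =>
      Finset.sum_le_sum fun z _ => Finset.sum_le_sum fun w _ => hpoint x y z w
  -- remove the zeros
  have hkey : ∀ (s : Finset ℤ) (f : ℤ → ℝ),
      (∑ a ∈ s, if a ≠ 0 then f a else 0) = ∑ a ∈ s.erase 0, f a := by
    intro s f
    rw [← Finset.sum_filter, Finset.filter_ne']
  have herase : ∑ x ∈ b₁, ∑ y ∈ b₁, ∑ z ∈ b₂, ∑ w ∈ b₂,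
      (if w ≠ 0 then if z ≠ 0 then if y ≠ 0 then if x ≠ 0 then
        ((x * z - y * w).natAbs.divisors.card : ℝ) else 0 else 0 else 0 else 0)
      = ∑ x ∈ b₁.erase 0, ∑ y ∈ b₁.erase 0, ∑ z ∈ b₂.erase 0, ∑ w ∈ b₂.erase 0,
        ((x * z - y * w).natAbs.divisors.card : ℝ) := by
    calc ∑ x ∈ b₁, ∑ y ∈ b₁, ∑ z ∈ b₂, ∑ w ∈ b₂,
        (if w ≠ 0 then if z ≠ 0 then if y ≠ 0 then if x ≠ 0 then
          ((x * z - y * w).natAbs.divisors.card : ℝ) else 0 else 0 else 0 else 0)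
        = ∑ x ∈ b₁, ∑ y ∈ b₁, ∑ z ∈ b₂, ∑ w ∈ b₂.erase 0,
          (if z ≠ 0 then if y ≠ 0 then if x ≠ 0 then
            ((x * z - y * w).natAbs.divisors.card : ℝ) else 0 else 0 else 0) := by
          refine Finset.sum_congr rfl fun x _ => Finset.sum_congr rfl fun y _ =>
            Finset.sum_congr rfl fun z _ => hkey _ _
      _ = ∑ x ∈ b₁, ∑ y ∈ b₁, ∑ z ∈ b₂.erase 0, ∑ w ∈ b₂.erase 0,
          (if y ≠ 0 then if x ≠ 0 then
            ((x * z - y * w).natAbs.divisors.card : ℝ) else 0 else 0) := by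
          refine Finset.sum_congr rfl fun x _ => Finset.sum_congr rfl fun y _ => ?_
          rw [← hkey]
          refine Finset.sum_congr rfl fun z _ => ?_
          split_ifs <;> simp
      _ = ∑ x ∈ b₁, ∑ y ∈ b₁.erase 0, ∑ z ∈ b₂.erase 0, ∑ w ∈ b₂.erase 0,
          (if x ≠ 0 then ((x * z - y * w).natAbs.divisors.card : ℝ) else 0) := by
          refine Finset.sum_congr rfl fun x _ => ?_
          rw [← hkey]
          refine Finset.sum_congr rfl fun y _ => ?_
          split_ifs <;> simp
      _ = ∑ x ∈ b₁.erase 0, ∑ y ∈ b₁.erase 0, ∑ z ∈ b₂.erase 0, ∑ w ∈ b₂.erase 0,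
          ((x * z - y * w).natAbs.divisors.card : ℝ) := by
          rw [← hkey]
          refine Finset.sum_congr rfl fun x _ => ?_
          split_ifs <;> simp
  -- numeric bounds
  have hAle : (A : ℝ) ≤ (β + 1) * s₁ := by
    have h := (Nat.ceil_lt_add_one (show (0:ℝ) ≤ β * s₁ by positivity)).le
    rw [hA]
    nlinarith
  have hBle : (B : ℝ) ≤ (β + 1) * s₂ := by
    have h := (Nat.ceil_lt_add_one (show (0:ℝ) ≤ β * s₂ by positivity)).le
    rw [hB]
    nlinarith
  have hglue := numeric_glue β s₁ s₂ hβ hs₁ hs₂ A B hAB hAle hBle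
  have hmc := main_comb A B hAB
  calc ∑ x ∈ b₁, ∑ y ∈ b₁, ∑ z ∈ b₂, ∑ w ∈ b₂,
      (if 1 ≤ |(x : ℝ)| ∧ |(x : ℝ)| ≤ β * s₁ ∧ 1 ≤ |(y : ℝ)| ∧ |(y : ℝ)| ≤ β * s₁ ∧
          1 ≤ |(z : ℝ)| ∧ |(z : ℝ)| ≤ β * s₂ ∧ 1 ≤ |(w : ℝ)| ∧ |(w : ℝ)| ≤ β * s₂ ∧
          x * z - y * w ≠ 0
        then ((x * z - y * w).natAbs.divisors.card : ℝ) else 0)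
      ≤ ∑ x ∈ b₁.erase 0, ∑ y ∈ b₁.erase 0, ∑ z ∈ b₂.erase 0, ∑ w ∈ b₂.erase 0,
        ((x * z - y * w).natAbs.divisors.card : ℝ) := by rw [← herase]; exact hb
    _ ≤ 32 * ((A * B : ℕ) : ℝ) ^ 2 * (1 + Real.log (2 * ((A * B : ℕ) : ℝ))) ^ 4 := hmc
    _ ≤ (32 * (β + 1) ^ 4 * (2 + Real.log (2 * (β + 1) ^ 2)) ^ 4)
          * s₁ ^ 2 * s₂ ^ 2 * (Real.log (s₁ * s₂ + 2)) ^ 4 := hglue
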